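/- Let f : ℝ → ℝ be a nonnegative integrable function with f(x) = 0 for x < 0 and ∫_{−∞}^{∞} f(x) dx = 1, let F(x) = ∫_{−∞}^{x} f(t) dt, and assume ∫_{0}^{∞} x·f(x) dx < ∞. Then for every y ≥ 0: ∫_{y}^{∞} ( x·f(x) − (1−F(x)) ) dx = y·(1−F(y)). (In terms of the virtual value φ(x) = x − (1−F(x))/f(x), this says E[φ(X) · 1{X ≥ y}] = y·Pr[X ≥ y], i.e., E[φ(X) | X ≥ y] = y.) -/

import Mathlib

open MeasureTheory Set

lemma core_swap (G : ℝ → ENNReal) (hG : Measurable G) (y : ℝ) :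
    ∫⁻ x in Ici y, ∫⁻ t in Ioi x, G t = ∫⁻ t, ENNReal.ofReal (t - y) * G t := by
  have hm : Measurable (fun p : ℝ × ℝ => (Ioi p.1).indicator G p.2) := by
    have : (fun p : ℝ × ℝ => (Ioi p.1).indicator G p.2)
        = fun p => {q : ℝ × ℝ | q.1 < q.2}.indicator (fun q => G q.2) p := by
      ext p; simp [Set.indicator, Set.mem_Ioi]
    rw [this]
    exact (hG.comp measurable_snd).indicator (measurableSet_lt measurable_fst measurable_snd)
  calc ∫⁻ x in Ici y, ∫⁻ t in Ioi x, G t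
      = ∫⁻ x in Ici y, ∫⁻ t, (Ioi x).indicator G t := by
        refine lintegral_congr fun x => ?_
        rw [lintegral_indicator measurableSet_Ioi _]
    _ = ∫⁻ t, ∫⁻ x in Ici y, (Ioi x).indicator G t := by
        exact lintegral_lintegral_swap hm.aemeasurable
    _ = ∫⁻ t, ENNReal.ofReal (t - y) * G t := by
        refine lintegral_congr fun t => ?_
        have : (fun x => (Ioi x).indicator G t) = (Iio t).indicator (fun _ => G t) := by
          ext x; simp [Set.indicator, Set.mem_Ioi, Set.mem_Iio]
        rw [this, lintegral_indicator measurableSet_Iio _,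
          Measure.restrict_restrict measurableSet_Iio, setLIntegral_const]
        have : Iio t ∩ Ici y = Ico y t := by ext z; simp [Set.mem_Ico, and_comm]
        rw [this, Real.volume_Ico, mul_comm]

theorem stmt_14 (f : ℝ → ℝ) (hf0 : ∀ x, 0 ≤ f x)
    (hfi : Integrable f)
    (hfneg : ∀ x : ℝ, x < 0 → f x = 0)
    (hprob : ∫ x, f x = 1)
    (hmean : Integrable fun x => x * f x)
    (y : ℝ) (hy : 0 ≤ y) :
    ∫ x in Set.Ici y, (x * f x - (1 - ∫ t in Set.Iic x, f t)) =
      y * (1 - ∫ t in Set.Iic y, f t) := by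
  set G : ℝ → ℝ := fun x => ∫ t in Ioi x, f t with hGdef
  -- 1 - F x = G x
  have key : ∀ x : ℝ, 1 - ∫ t in Iic x, f t = G x := by
    intro x
    have := intervalIntegral.integral_Iic_add_Ioi (b := x) (μ := volume) hfi.integrableOn hfi.integrableOn
    rw [hprob] at this
    simp only [hGdef]; linarith
  -- measurable representative of f
  obtain ⟨fm, hfm, hfe⟩ : ∃ fm : ℝ → ℝ, Measurable fm ∧ f =ᵐ[volume] fm :=
    ⟨hfi.aemeasurable.mk f, hfi.aemeasurable.measurable_mk, hfi.aemeasurable.ae_eq_mk⟩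
  have hfm' : Measurable fun t => ENNReal.ofReal (fm t) := hfm.ennreal_ofReal
  have hGnn : ∀ x, 0 ≤ G x := fun x =>
    setIntegral_nonneg measurableSet_Ioi fun t _ => hf0 t
  -- key lintegral identity
  have hlint : ∫⁻ x in Ici y, ENNReal.ofReal (G x)
      = ∫⁻ t, ENNReal.ofReal (t - y) * ENNReal.ofReal (f t) := by
    have h1 : ∀ x : ℝ, ENNReal.ofReal (G x) = ∫⁻ t in Ioi x, ENNReal.ofReal (fm t) := by
      intro x
      have hint : IntegrableOn fm (Ioi x) :=
        (hfi.integrableOn (s := Ioi x)).congr_fun_ae (ae_restrict_of_ae hfe)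
      have hnn : 0 ≤ᵐ[volume.restrict (Ioi x)] fm :=
        ae_restrict_of_ae (hfe.mono fun t ht => ht ▸ hf0 t)
      have : G x = ∫ t in Ioi x, fm t :=
        integral_congr_ae (ae_restrict_of_ae hfe)
      rw [this, ofReal_integral_eq_lintegral_ofReal hint hnn]
    calc ∫⁻ x in Ici y, ENNReal.ofReal (G x)
        = ∫⁻ x in Ici y, ∫⁻ t in Ioi x, ENNReal.ofReal (fm t) :=
          lintegral_congr fun x => h1 x
      _ = ∫⁻ t, ENNReal.ofReal (t - y) * ENNReal.ofReal (fm t) := core_swap _ hfm' y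
      _ = ∫⁻ t, ENNReal.ofReal (t - y) * ENNReal.ofReal (f t) := by
          refine lintegral_congr_ae (hfe.mono fun t ht => ?_)
          dsimp only
          rw [ht]
  -- the common lintegral is finite
  have hfin : (∫⁻ t, ENNReal.ofReal (t - y) * ENNReal.ofReal (f t)) < ⊤ := by
    have hb : ∀ t : ℝ, ENNReal.ofReal (t - y) * ENNReal.ofReal (f t)
        ≤ ENNReal.ofReal (t * f t) := by
      intro t
      rcases lt_or_ge t 0 with ht | ht
      · simp [hfneg t ht]
      · calc ENNReal.ofReal (t - y) * ENNReal.ofReal (f t)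
            ≤ ENNReal.ofReal t * ENNReal.ofReal (f t) :=
              mul_le_mul_left (ENNReal.ofReal_le_ofReal (by linarith)) _
          _ = ENNReal.ofReal (t * f t) := (ENNReal.ofReal_mul ht).symm
    calc ∫⁻ t, ENNReal.ofReal (t - y) * ENNReal.ofReal (f t)
        ≤ ∫⁻ t, ENNReal.ofReal (t * f t) := lintegral_mono hb
      _ ≤ ∫⁻ t, (‖t * f t‖₊ : ENNReal) := by
          refine lintegral_mono fun t => ?_
          rw [← enorm_eq_nnnorm, Real.enorm_eq_ofReal_abs]
          exact ENNReal.ofReal_le_ofReal (le_abs_self _)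
      _ < ⊤ := hmean.2
  -- the lintegral equals the restricted version
  have hlint2 : ∫⁻ t, ENNReal.ofReal (t - y) * ENNReal.ofReal (f t)
      = ∫⁻ t in Ici y, ENNReal.ofReal ((t - y) * f t) := by
    rw [← lintegral_add_compl (fun t => ENNReal.ofReal (t - y) * ENNReal.ofReal (f t))
      measurableSet_Ici]
    have hz : ∫⁻ t in (Ici y)ᶜ, ENNReal.ofReal (t - y) * ENNReal.ofReal (f t) = 0 := by
      rw [compl_Ici]
      rw [show (∫⁻ t in Iio y, ENNReal.ofReal (t - y) * ENNReal.ofReal (f t))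
          = ∫⁻ _ in Iio y, (0 : ENNReal) from
        setLIntegral_congr_fun measurableSet_Iio (fun t (ht : t < y) => by
          rw [ENNReal.ofReal_eq_zero.2 (by linarith : t - y ≤ 0), zero_mul]), lintegral_zero]
    rw [hz, add_zero]
    refine setLIntegral_congr_fun measurableSet_Ici (fun t ht => ?_)
    rw [ENNReal.ofReal_mul (by simpa using sub_nonneg.2 (mem_Ici.1 ht))]
  -- integrability of G on Ici y
  have hGanti : Antitone G := by
    intro a b hab
    exact setIntegral_mono_set hfi.integrableOn (ae_of_all _ hf0)
      (HasSubset.Subset.eventuallyLE (Ioi_subset_Ioi hab))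
  have hGint : IntegrableOn G (Ici y) := by
    refine ⟨(hGanti.measurable).aestronglyMeasurable, ?_⟩
    rw [hasFiniteIntegral_iff_norm]
    have : ∀ x : ℝ, ENNReal.ofReal ‖G x‖ = ENNReal.ofReal (G x) := fun x => by
      rw [Real.norm_of_nonneg (hGnn x)]
    simp_rw [this]
    rw [hlint]
    exact hfin
  -- integrability of (t - y) * f t on Ici y
  have hmint : IntegrableOn (fun t => (t - y) * f t) (Ici y) := by
    have := hmean.integrableOn (s := Ici y) |>.sub ((hfi.integrableOn (s := Ici y)).const_mul y)
    simpa [sub_mul, Pi.sub_def] using this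
  -- equality of the two real integrals
  have heq : ∫ x in Ici y, G x = ∫ t in Ici y, (t - y) * f t := by
    rw [integral_eq_lintegral_of_nonneg_ae (ae_of_all _ fun x => hGnn x)
      hGint.aestronglyMeasurable,
      integral_eq_lintegral_of_nonneg_ae
        (ae_restrict_of_forall_mem measurableSet_Ici fun t ht =>
          mul_nonneg (sub_nonneg.2 (mem_Ici.1 ht)) (hf0 t))
      hmint.aestronglyMeasurable]
    rw [hlint, hlint2]
  have hIci : ∫ t in Ici y, f t = G y := integral_Ici_eq_integral_Ioi
  have hsplit : ∫ t in Ici y, (t - y) * f t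
      = (∫ t in Ici y, t * f t) - y * ∫ t in Ici y, f t := by
    simp_rw [sub_mul]
    rw [integral_sub hmean.integrableOn ((hfi.integrableOn).const_mul y),
      MeasureTheory.integral_const_mul]
  calc ∫ x in Ici y, (x * f x - (1 - ∫ t in Iic x, f t))
      = ∫ x in Ici y, (x * f x - G x) := by
        refine setIntegral_congr_fun measurableSet_Ici fun x _ => ?_
        rw [key x]
    _ = (∫ x in Ici y, x * f x) - ∫ x in Ici y, G x :=
        integral_sub hmean.integrableOn hGint
    _ = y * G y := by rw [heq, hsplit, hIci]; ring
    _ = y * (1 - ∫ t in Iic y, f t) := by rw [key y]
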